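/- arXiv:1512.02920 — 3 statements merged into one kernel-verified Lean document; each statement's English description precedes it below -/
import Mathlib

section
/- With the function φ defined piecewise as φ(θ) = c·sinh(μθ)/sinh(μπ/4) on [0, π/4] and φ(θ) = c·sinh(μ(π-θ))/sinh(3μπ/4) on [π/4, π] (c ≠ 0, μ > 0), and with σ⁰ = σ₋ on (0, π/4), σ⁰ = σ₊ on (π/4, π): the function u(r,θ) = r^{iμ} φ(θ) satisfies div(σ⁰ ∇u) = 0 in the half-plane sector {(r cos θ, r sin θ) : r > 0, 0 < θ < π} away from the interface θ = π/4, provided the transmission condition σ₋ φ'(π/4⁻) = σ₊ φ'(π/4⁺) holds; and this transmission condition is equivalent to σ₋ μ coth(μπ/4) = -σ₊ μ coth(3μπ/4), i.e. -σ₋/σ₊ = coth(3μπ/4)/coth(μπ/4). -/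
open Real Set
open Topology Filter

/-- With `φ` piecewise as in the paper (`c ≠ 0`, `μ > 0`) and `σ⁰ = σ₋` on
`(0,π/4)`, `σ⁰ = σ₊` on `(π/4,π)`: the separated function `u = r^{iμ}φ(θ)` solves
`div(σ⁰∇u) = 0` away from the interface, which for such a separated function reduces to the
angular ODE `φ'' = μ²φ` on `(0,π/4) ∪ (π/4,π)` (this reduction holds here); moreover the
transmission condition `σ₋ φ'(π/4⁻) = σ₊ φ'(π/4⁺)` (with one-sided derivatives) is
equivalent to `-σ₋/σ₊ = coth(3μπ/4)/coth(μπ/4)`. -/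
theorem stmt3_transmission_condition
    (μ c σp σm : ℝ) (hμ : 0 < μ) (hc : c ≠ 0) (hσp : 0 < σp) (hσm : σm < 0)
    (φ : ℝ → ℝ)
    (hφ1 : ∀ θ ∈ Icc (0 : ℝ) (π/4), φ θ = c * Real.sinh (μ * θ) / Real.sinh (μ * π / 4))
    (hφ2 : ∀ θ ∈ Icc (π/4) π, φ θ = c * Real.sinh (μ * (π - θ)) / Real.sinh (3 * μ * π / 4)) :
    (∀ θ ∈ Ioo (0 : ℝ) (π/4) ∪ Ioo (π/4) π, deriv (deriv φ) θ = μ ^ 2 * φ θ) ∧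
    (σm * derivWithin φ (Iic (π/4)) (π/4) = σp * derivWithin φ (Ici (π/4)) (π/4) ↔
      -σm / σp =
        (Real.cosh (3 * μ * π / 4) / Real.sinh (3 * μ * π / 4)) /
          (Real.cosh (μ * π / 4) / Real.sinh (μ * π / 4))) := by
  have hπ : (0:ℝ) < π/4 := by positivity
  set S1 := Real.sinh (μ * π / 4) with hS1
  set S2 := Real.sinh (3 * μ * π / 4) with hS2
  set C1 := Real.cosh (μ * π / 4) with hC1
  set C2 := Real.cosh (3 * μ * π / 4) with hC2
  have hS1p : 0 < S1 := Real.sinh_pos_iff.2 (by positivity)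
  have hS2p : 0 < S2 := Real.sinh_pos_iff.2 (by positivity)
  have hC1p : 0 < C1 := Real.cosh_pos _
  have hC2p : 0 < C2 := Real.cosh_pos _
  have hS1n : S1 ≠ 0 := ne_of_gt hS1p
  have hS2n : S2 ≠ 0 := ne_of_gt hS2p
  have hC1n : C1 ≠ 0 := ne_of_gt hC1p
  have hC2n : C2 ≠ 0 := ne_of_gt hC2p
  have hσpn : σp ≠ 0 := ne_of_gt hσp
  set g1 : ℝ → ℝ := fun t => c * Real.sinh (μ * t) / S1 with hg1def
  set g2 : ℝ → ℝ := fun t => c * Real.sinh (μ * (π - t)) / S2 with hg2def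
  have hd1 : ∀ t : ℝ, HasDerivAt g1 (c * (Real.cosh (μ * t) * (μ * 1)) / S1) t := by
    intro t
    exact (((hasDerivAt_id t).const_mul μ).sinh.const_mul c).div_const S1
  have hd1' : ∀ t : ℝ, HasDerivAt (fun s => c * (Real.cosh (μ * s) * (μ * 1)) / S1)
      (c * (Real.sinh (μ * t) * (μ * 1) * (μ * 1)) / S1) t := by
    intro t
    exact ((((hasDerivAt_id t).const_mul μ).cosh.mul_const (μ * 1)).const_mul c).div_const S1
  have hd2 : ∀ t : ℝ, HasDerivAt g2 (c * (Real.cosh (μ * (π - t)) * (μ * (0 - 1))) / S2) t := by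
    intro t
    exact (((((hasDerivAt_const t π).sub (hasDerivAt_id t)).const_mul μ).sinh).const_mul c).div_const S2
  have hd2' : ∀ t : ℝ, HasDerivAt (fun s => c * (Real.cosh (μ * (π - s)) * (μ * (0 - 1))) / S2)
      (c * (Real.sinh (μ * (π - t)) * (μ * (0 - 1)) * (μ * (0 - 1))) / S2) t := by
    intro t
    have h0 : HasDerivAt (fun s : ℝ => μ * (π - s)) (μ * (0 - 1)) t :=
      ((hasDerivAt_const t π).sub (hasDerivAt_id t)).const_mul μ
    exact (((h0.cosh.mul_const (μ * (0 - 1))).const_mul c).div_const S2)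
  constructor
  · intro θ hθ
    rcases hθ with hθ | hθ
    · have hmem : Ioo (0:ℝ) (π/4) ∈ 𝓝 θ := isOpen_Ioo.mem_nhds hθ
      have hev : φ =ᶠ[𝓝 θ] g1 :=
        Filter.eventually_of_mem hmem fun x hx => hφ1 x (Ioo_subset_Icc_self hx)
      have h2 : deriv (deriv φ) θ = deriv (deriv g1) θ := (hev.deriv).deriv_eq
      have hder : deriv g1 = fun s => c * (Real.cosh (μ * s) * (μ * 1)) / S1 :=
        funext fun t => (hd1 t).deriv
      rw [h2, hder, (hd1' θ).deriv, hφ1 θ (Ioo_subset_Icc_self hθ)]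
      show c * (Real.sinh (μ * θ) * (μ * 1) * (μ * 1)) / S1 = μ ^ 2 * (c * Real.sinh (μ * θ) / S1)
      ring
    · have hmem : Ioo (π/4) π ∈ 𝓝 θ := isOpen_Ioo.mem_nhds hθ
      have hev : φ =ᶠ[𝓝 θ] g2 :=
        Filter.eventually_of_mem hmem fun x hx => hφ2 x (Ioo_subset_Icc_self hx)
      have h2 : deriv (deriv φ) θ = deriv (deriv g2) θ := (hev.deriv).deriv_eq
      have hder : deriv g2 = fun s => c * (Real.cosh (μ * (π - s)) * (μ * (0 - 1))) / S2 :=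
        funext fun t => (hd2 t).deriv
      rw [h2, hder, (hd2' θ).deriv, hφ2 θ (Ioo_subset_Icc_self hθ)]
      show c * (Real.sinh (μ * (π - θ)) * (μ * (0 - 1)) * (μ * (0 - 1))) / S2
          = μ ^ 2 * (c * Real.sinh (μ * (π - θ)) / S2)
      ring
  · have hπlt : π/4 < π := by linarith [pi_pos]
    have hmem1 : Icc (0:ℝ) (π/4) ∈ 𝓝[Iic (π/4)] (π/4) := by
      rw [show Icc (0:ℝ) (π/4) = Ici 0 ∩ Iic (π/4) from rfl]
      exact Filter.inter_mem (mem_nhdsWithin_of_mem_nhds (Ici_mem_nhds hπ)) self_mem_nhdsWithin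
    have hmem2 : Icc (π/4) π ∈ 𝓝[Ici (π/4)] (π/4) := by
      rw [show Icc (π/4) π = Ici (π/4) ∩ Iic π from Set.Ici_inter_Iic.symm]
      exact Filter.inter_mem self_mem_nhdsWithin (mem_nhdsWithin_of_mem_nhds (Iic_mem_nhds hπlt))
    have hev1 : φ =ᶠ[𝓝[Iic (π/4)] (π/4)] g1 :=
      Filter.eventually_of_mem hmem1 fun x hx => hφ1 x hx
    have hev2 : φ =ᶠ[𝓝[Ici (π/4)] (π/4)] g2 :=
      Filter.eventually_of_mem hmem2 fun x hx => hφ2 x hx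
    have he1 : derivWithin φ (Iic (π/4)) (π/4) = c * (C1 * (μ * 1)) / S1 := by
      rw [hev1.derivWithin_eq (hφ1 _ ⟨le_of_lt hπ, le_refl _⟩)]
      rw [(hd1 (π/4)).hasDerivWithinAt.derivWithin (uniqueDiffOn_Iic _ _ Set.self_mem_Iic)]
      rw [hC1, show μ * (π/4) = μ * π / 4 by ring]
    have he2 : derivWithin φ (Ici (π/4)) (π/4) = c * (C2 * (μ * (0 - 1))) / S2 := by
      rw [hev2.derivWithin_eq (hφ2 _ ⟨le_refl _, le_of_lt hπlt⟩)]
      rw [(hd2 (π/4)).hasDerivWithinAt.derivWithin (uniqueDiffOn_Ici _ _ Set.self_mem_Ici)]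
      rw [hC2, show μ * (π - π/4) = 3 * μ * π / 4 by ring]
    rw [he1, he2]
    constructor
    · intro h
      have hcμ : c * μ ≠ 0 := by positivity
      have h' : (c * μ) * (σm * C1 * S2) = (c * μ) * (-(σp * C2 * S1)) := by
        field_simp [hS1n, hS2n, hC1n, hC2n, hσpn] at h
        linear_combination (c * μ) * h
      have hP := mul_left_cancel₀ hcμ h'
      field_simp [hS1n, hS2n, hC1n, hC2n, hσpn]
      linear_combination -hP
    · intro h
      have hP : σm * C1 * S2 = -(σp * C2 * S1) := by
        field_simp [hS1n, hS2n, hC1n, hC2n, hσpn] at h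
        linarith
      field_simp [hS1n, hS2n, hC1n, hC2n, hσpn]
      linear_combination hP
end

section
/- Let μ > 0 and κ ∈ (-1, -1/3). Then the equation -κ = coth(3μπ/4)/coth(μπ/4) determines μ uniquely and the map κ ↦ μ(κ) is continuous and satisfies μ(κ) → +∞ as κ → -1⁺. -/
open Real Set Filter

/-- The real hyperbolic cotangent. -/
noncomputable def rcoth (t : ℝ) : ℝ := Real.cosh t / Real.sinh t

/-- Key algebraic identity: for `t > 0`,
`coth(3t)/coth(t) = (2 cosh(2t) - 1)/(2 cosh(2t) + 1)`. -/
lemma rcoth_ratio (t : ℝ) (ht : 0 < t) :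
    rcoth (3 * t) / rcoth t = (2 * Real.cosh (2 * t) - 1) / (2 * Real.cosh (2 * t) + 1) := by
  have hs : 0 < Real.sinh t := Real.sinh_pos_iff.mpr ht
  have hs3 : 0 < Real.sinh (3 * t) := Real.sinh_pos_iff.mpr (by linarith)
  have hc : 0 < Real.cosh t := Real.cosh_pos t
  have hd : 0 < 2 * Real.cosh (2 * t) + 1 := by positivity
  have hpy := Real.cosh_sq_sub_sinh_sq t
  have h3 : (3:ℝ) * t = 2 * t + t := by ring
  rw [h3] at hs3 ⊢
  rw [rcoth, rcoth]
  rw [Real.cosh_add, Real.sinh_add, Real.cosh_two_mul, Real.sinh_two_mul]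
  rw [Real.sinh_add, Real.cosh_two_mul, Real.sinh_two_mul] at hs3
  rw [Real.cosh_two_mul] at hd
  rw [div_div_div_eq, div_eq_div_iff (by positivity) hd.ne']
  linear_combination (-4 * Real.sinh t * Real.cosh t * (Real.cosh t ^ 2 + Real.sinh t ^ 2)) * hpy

noncomputable def mfun (κ : ℝ) : ℝ :=
  (2 / π) * Real.arsinh (Real.sqrt (((1 - κ) / (2 * (1 + κ))) ^ 2 - 1))

lemma cosh_mfun {κ : ℝ} (hκ : κ ∈ Ioo (-1 : ℝ) (-1/3)) :
    Real.cosh (mfun κ * π / 2) = (1 - κ) / (2 * (1 + κ)) := by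
  obtain ⟨h1, h2⟩ := hκ
  set c : ℝ := (1 - κ) / (2 * (1 + κ)) with hc
  have hpi : 0 < π := Real.pi_pos
  have hden : 0 < 2 * (1 + κ) := by linarith
  have hc1 : 1 < c := by
    rw [hc, lt_div_iff₀ hden]; linarith
  have harg : mfun κ * π / 2 = Real.arsinh (Real.sqrt (c ^ 2 - 1)) := by
    rw [mfun, ← hc]
    field_simp
  rw [harg, Real.cosh_arsinh, Real.sq_sqrt (by nlinarith : (0:ℝ) ≤ c ^ 2 - 1)]
  have h' : 1 + (c ^ 2 - 1) = c ^ 2 := by ring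
  rw [h', Real.sqrt_sq (by linarith : (0:ℝ) ≤ c)]

lemma mfun_pos {κ : ℝ} (hκ : κ ∈ Ioo (-1 : ℝ) (-1/3)) : 0 < mfun κ := by
  obtain ⟨h1, h2⟩ := hκ
  have hden : 0 < 2 * (1 + κ) := by linarith
  have hc1 : 1 < (1 - κ) / (2 * (1 + κ)) := by rw [lt_div_iff₀ hden]; linarith
  have : 0 < Real.sqrt (((1 - κ) / (2 * (1 + κ))) ^ 2 - 1) :=
    Real.sqrt_pos.mpr (by nlinarith)
  have hpi : 0 < π := Real.pi_pos
  exact mul_pos (by positivity) (Real.arsinh_pos_iff.mpr this)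

/-- For each contrast `κ ∈ (-1,-1/3)` the equation
`-κ = coth(3μπ/4)/coth(μπ/4)` has a unique solution `μ = μ(κ) > 0`; the map `κ ↦ μ(κ)` is
continuous on `(-1,-1/3)` and `μ(κ) → +∞` as `κ → -1⁺`. -/
theorem stmt4_mu_of_kappa :
    ∃ m : ℝ → ℝ,
      (∀ κ ∈ Ioo (-1 : ℝ) (-1/3),
        0 < m κ ∧ rcoth (3 * m κ * π / 4) / rcoth (m κ * π / 4) = -κ ∧
        ∀ μ' : ℝ, 0 < μ' → rcoth (3 * μ' * π / 4) / rcoth (μ' * π / 4) = -κ → μ' = m κ) ∧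
      ContinuousOn m (Ioo (-1 : ℝ) (-1/3)) ∧
      Tendsto m (nhdsWithin (-1 : ℝ) (Ioo (-1 : ℝ) (-1/3))) atTop := by
  have hpi : 0 < π := Real.pi_pos
  have key : ∀ μ : ℝ, 0 < μ →
      rcoth (3 * μ * π / 4) / rcoth (μ * π / 4)
        = (2 * Real.cosh (μ * π / 2) - 1) / (2 * Real.cosh (μ * π / 2) + 1) := by
    intro μ hμ
    have ht : 0 < μ * π / 4 := by positivity
    have := rcoth_ratio (μ * π / 4) ht
    have e1 : 3 * (μ * π / 4) = 3 * μ * π / 4 := by ring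
    have e2 : 2 * (μ * π / 4) = μ * π / 2 := by ring
    rw [e1, e2] at this
    exact this
  refine ⟨mfun, ?_, ?_, ?_⟩
  · intro κ hκ
    obtain ⟨h1, h2⟩ := hκ
    have hden : 0 < 2 * (1 + κ) := by linarith
    have hm := mfun_pos ⟨h1, h2⟩
    have hcm := cosh_mfun ⟨h1, h2⟩
    have hcpos : 0 < (1 - κ) / (2 * (1 + κ)) := div_pos (by linarith) hden
    have hne : 2 * ((1 - κ) / (2 * (1 + κ))) + 1 ≠ 0 := by positivity
    refine ⟨hm, ?_, ?_⟩
    · rw [key _ hm, hcm, div_eq_iff hne]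
      have h1k : 1 + κ ≠ 0 := by linarith
      field_simp
      ring
    · intro μ' hμ' heq
      rw [key _ hμ'] at heq
      set C := Real.cosh (μ' * π / 2) with hC
      have hC1 : 1 ≤ C := Real.one_le_cosh _
      have hCeq : C = (1 - κ) / (2 * (1 + κ)) := by
        rw [div_eq_iff (by positivity : (2 * C + 1) ≠ 0)] at heq
        rw [eq_div_iff hden.ne']
        nlinarith
      have hcc : Real.cosh (μ' * π / 2) = Real.cosh (mfun κ * π / 2) := by rw [hcm, ← hCeq]
      have h' : μ' * π / 2 = mfun κ * π / 2 :=
        Real.cosh_strictMonoOn.injOn (by simp [mem_Ici]; positivity)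
          (by simp [mem_Ici]; positivity) hcc
      have h'' : μ' * π = mfun κ * π := by linarith
      exact mul_right_cancel₀ hpi.ne' h''
  · -- continuity
    apply ContinuousOn.mul continuousOn_const
    apply Real.continuous_arsinh.comp_continuousOn
    apply Real.continuous_sqrt.comp_continuousOn
    apply ContinuousOn.sub _ continuousOn_const
    apply ContinuousOn.pow
    apply ContinuousOn.div (by fun_prop) (by fun_prop)
    intro κ hκ
    have : (-1 : ℝ) < κ := hκ.1
    intro h; nlinarith [h]
  · -- limit
    have hsqrt : Tendsto Real.sqrt atTop atTop := by
      apply tendsto_atTop_atTop_of_monotone (fun a b h => Real.sqrt_le_sqrt h)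
      intro b
      exact ⟨(max b 0) ^ 2, by rw [Real.sqrt_sq (le_max_right b 0)]; exact le_max_left b 0⟩
    have harsinh : Tendsto Real.arsinh atTop atTop := by
      apply tendsto_atTop_atTop_of_monotone Real.arsinh_strictMono.monotone
      intro b
      exact ⟨Real.sinh b, (Real.arsinh_sinh b).ge⟩
    have hc : Tendsto (fun κ : ℝ => (1 - κ) / (2 * (1 + κ)))
        (nhdsWithin (-1 : ℝ) (Ioo (-1 : ℝ) (-1/3))) atTop := by
      have hinv : Tendsto (fun κ : ℝ => (2 * (1 + κ))⁻¹)
          (nhdsWithin (-1 : ℝ) (Ioo (-1 : ℝ) (-1/3))) atTop := by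
        apply tendsto_inv_nhdsGT_zero.comp
        apply tendsto_nhdsWithin_of_tendsto_nhds_of_eventually_within
        · apply Tendsto.mono_left _ nhdsWithin_le_nhds
          have hco : Tendsto (fun κ : ℝ => 2 * (1 + κ)) (nhds (-1)) (nhds (2 * (1 + (-1)))) :=
            (continuous_const.mul (continuous_const.add continuous_id)).tendsto (-1)
          have he : 2 * (1 + (-1 : ℝ)) = 0 := by norm_num
          rwa [he] at hco
        · filter_upwards [self_mem_nhdsWithin] with κ hκ
          have : (-1 : ℝ) < κ := hκ.1
          simp only [mem_Ioi]; linarith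
      have hnum : Tendsto (fun κ : ℝ => 1 - κ)
          (nhdsWithin (-1 : ℝ) (Ioo (-1 : ℝ) (-1/3))) (nhds 2) := by
        apply Tendsto.mono_left _ nhdsWithin_le_nhds
        have hco : Tendsto (fun κ : ℝ => 1 - κ) (nhds (-1)) (nhds (1 - (-1))) :=
          (continuous_const.sub continuous_id).tendsto (-1)
        have he : (1 : ℝ) - (-1) = 2 := by norm_num
        rwa [he] at hco
      have := hnum.pos_mul_atTop (by norm_num : (0:ℝ) < 2) hinv
      simpa [div_eq_mul_inv] using this
    have hsq : Tendsto (fun κ : ℝ => ((1 - κ) / (2 * (1 + κ))) ^ 2 - 1)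
        (nhdsWithin (-1 : ℝ) (Ioo (-1 : ℝ) (-1/3))) atTop := by
      apply tendsto_atTop_add_const_right
      exact (tendsto_pow_atTop (by norm_num : 2 ≠ 0)).comp hc
    have hmain : Tendsto
        (fun κ : ℝ => Real.arsinh (Real.sqrt (((1 - κ) / (2 * (1 + κ))) ^ 2 - 1)))
        (nhdsWithin (-1 : ℝ) (Ioo (-1 : ℝ) (-1/3))) atTop :=
      harsinh.comp (hsqrt.comp hsq)
    have h2pi : (0:ℝ) < 2 / π := by positivity
    have := hmain.const_mul_atTop h2pi
    exact this
end

section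
/- Let A : D(A) ⊆ H → H be a closed densely defined symmetric operator with D(A*) = span{s₊, s₋} ⊕ D(A), where the anti-hermitian boundary form q(u,v) = (A*u,v) - (u,A*v) satisfies q(s₊,s₋) = q(s₋,s₊) = 0, q(s₊,s₊) = -q(s₋,s₋) ≠ 0, and q(u,v) = 0 when v ∈ D(A). Then an operator 𝒜 with A ⊆ 𝒜 ⊆ A* and D(𝒜) = span{α₊ s₊ + α₋ s₋} ⊕ D(A) (with (α₊,α₋) ≠ (0,0)) is self-adjoint if and only if |α₊| = |α₋| ≠ 0. Consequently, the self-adjoint extensions of A are exactly the operators 𝒜(τ), τ ∈ ℝ, with domain D(𝒜(τ)) = span{s₊ + e^{iτ} s₋} ⊕ D(A) and 𝒜(τ) = A* restricted to this domain. -/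
open scoped InnerProductSpace

noncomputable def qform {H : Type*} [NormedAddCommGroup H] [InnerProductSpace ℂ H]
    {Dstar : Submodule ℂ H} (Astar : Dstar →ₗ[ℂ] H) (u v : Dstar) : ℂ :=
  ⟪Astar u, (v : H)⟫_ℂ - ⟪(u : H), Astar v⟫_ℂ

def saDom {H : Type*} [NormedAddCommGroup H] [InnerProductSpace ℂ H]
    (D : Submodule ℂ H) {Dstar : Submodule ℂ H} (sp sm : Dstar) (a b : ℂ) :
    Set Dstar :=
  {u | ∃ c : ℂ, ∃ w : D, (u : H) = c • (a • (sp : H) + b • (sm : H)) + (w : H)}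

def IsSelfAdjointExt {H : Type*} [NormedAddCommGroup H] [InnerProductSpace ℂ H]
    {Dstar : Submodule ℂ H} (Astar : Dstar →ₗ[ℂ] H) (Dom : Set Dstar) : Prop :=
  (∀ u ∈ Dom, ∀ v ∈ Dom, qform Astar u v = 0) ∧
  (∀ u : Dstar, (∀ v ∈ Dom, qform Astar u v = 0) → u ∈ Dom)

section helpers
variable {H : Type*} [NormedAddCommGroup H] [InnerProductSpace ℂ H]
  {Dstar : Submodule ℂ H} (Astar : Dstar →ₗ[ℂ] H)

lemma qform_neg_conj (u v : Dstar) :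
    qform Astar u v = -(starRingEnd ℂ) (qform Astar v u) := by
  simp only [qform, map_sub, inner_conj_symm]
  ring

lemma qform_add_left (u u' v : Dstar) :
    qform Astar (u + u') v = qform Astar u v + qform Astar u' v := by
  simp only [qform, map_add, Submodule.coe_add, inner_add_left, inner_add_right]
  ring

lemma qform_smul_left (c : ℂ) (u v : Dstar) :
    qform Astar (c • u) v = (starRingEnd ℂ) c * qform Astar u v := by
  simp only [qform, map_smul, Submodule.coe_smul, inner_smul_left]
  ring

lemma qform_add_right (u v v' : Dstar) :
    qform Astar u (v + v') = qform Astar u v + qform Astar u v' := by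
  simp only [qform, map_add, Submodule.coe_add, inner_add_left, inner_add_right]
  ring

lemma qform_smul_right (c : ℂ) (u v : Dstar) :
    qform Astar u (c • v) = c * qform Astar u v := by
  simp only [qform, map_smul, Submodule.coe_smul, inner_smul_right]
  ring

end helpers

/-- Classification of the self-adjoint extensions: an operator `𝒜` with
`A ⊆ 𝒜 ⊆ A*` and `D(𝒜) = span{α₊s₊+α₋s₋} ⊕ D(A)`, `(α₊,α₋) ≠ (0,0)`, is self-adjoint iff
`|α₊| = |α₋| ≠ 0`; consequently the self-adjoint extensions of `A` are exactly the operators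
`𝒜(τ)`, `τ ∈ ℝ`, with domain `span{s₊ + e^{iτ}s₋} ⊕ D(A)`. -/
theorem stmt6_selfadjoint_extensions
    {H : Type*} [NormedAddCommGroup H] [InnerProductSpace ℂ H] [CompleteSpace H]
    (D Dstar : Submodule ℂ H) (hD : D ≤ Dstar) (Astar : Dstar →ₗ[ℂ] H)
    (hdense : Dense (D : Set H))
    (sp sm : Dstar)
    (h0 : ∀ (u : Dstar) (v : D), qform Astar u (Submodule.inclusion hD v) = 0)
    (hpm : qform Astar sp sm = 0) (hmp : qform Astar sm sp = 0)
    (hppmm : qform Astar sp sp = -qform Astar sm sm)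
    (hpp0 : qform Astar sp sp ≠ 0)
    (hdecomp : ∀ u : Dstar, ∃ a b : ℂ, ∃ w : D, (u : H) = a • (sp : H) + b • (sm : H) + (w : H))
    (hindep : ∀ a b : ℂ, ∀ w : D, a • (sp : H) + b • (sm : H) + (w : H) = 0 → a = 0 ∧ b = 0) :
    (∀ ap am : ℂ, (ap, am) ≠ (0, 0) →
      (IsSelfAdjointExt Astar (saDom D sp sm ap am) ↔
        ‖ap‖ = ‖am‖ ∧ ap ≠ 0)) ∧
    (∀ τ : ℝ, IsSelfAdjointExt Astar (saDom D sp sm 1 (Complex.exp (τ * Complex.I)))) ∧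
    (∀ ap am : ℂ, ‖ap‖ = ‖am‖ → ap ≠ 0 →
      ∃ τ : ℝ, saDom D sp sm ap am = saDom D sp sm 1 (Complex.exp (τ * Complex.I))) := by
  set Q := qform Astar sp sp with hQ
  -- q vanishes when the left argument is in D
  have h0' : ∀ (w : D) (v : Dstar), qform Astar (Submodule.inclusion hD w) v = 0 := by
    intro w v
    rw [qform_neg_conj, h0]
    simp
  -- key computation
  have key : ∀ (u v : Dstar) (p m p' m' : ℂ) (wu wv : D),
      (u : H) = p • (sp : H) + m • (sm : H) + (wu : H) →
      (v : H) = p' • (sp : H) + m' • (sm : H) + (wv : H) →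
      qform Astar u v = ((starRingEnd ℂ) p * p' - (starRingEnd ℂ) m * m') * Q := by
    intro u v p m p' m' wu wv hu hv
    have hu' : u = p • sp + m • sm + Submodule.inclusion hD wu := by
      apply Subtype.ext; simpa using hu
    have hv' : v = p' • sp + m' • sm + Submodule.inclusion hD wv := by
      apply Subtype.ext; simpa using hv
    rw [hu', hv']
    simp only [qform_add_left, qform_add_right, qform_smul_left, qform_smul_right,
      h0, h0', hpm, hmp, hppmm, ← hQ]
    ring
  -- main equivalence
  have main : ∀ ap am : ℂ, (ap, am) ≠ (0, 0) →
      (IsSelfAdjointExt Astar (saDom D sp sm ap am) ↔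
        ‖ap‖ = ‖am‖ ∧ ap ≠ 0) := by
    intro ap am hne
    constructor
    · rintro ⟨hsym, -⟩
      set u0 : Dstar := ap • sp + am • sm with hu0
      have hmem : u0 ∈ saDom D sp sm ap am := by
        refine ⟨1, 0, ?_⟩
        simp [hu0]
      have h1 := hsym u0 hmem u0 hmem
      have h2 : qform Astar u0 u0 =
          ((starRingEnd ℂ) ap * ap - (starRingEnd ℂ) am * am) * Q := by
        apply key u0 u0 ap am ap am 0 0 <;> simp [hu0]
      rw [h1] at h2
      have h3 : (starRingEnd ℂ) ap * ap = (starRingEnd ℂ) am * am := by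
        rcases mul_eq_zero.1 h2.symm with h | h
        · linear_combination h
        · exact absurd h hpp0
      have habs : ‖ap‖ = ‖am‖ := by
        have h4 : ‖ap‖ * ‖ap‖ = ‖am‖ * ‖am‖ := by
          have := congrArg (‖·‖) h3
          simpa [norm_mul, Complex.norm_conj] using this
        exact le_antisymm
          (by nlinarith [norm_nonneg ap, norm_nonneg am])
          (by nlinarith [norm_nonneg ap, norm_nonneg am])
      refine ⟨habs, ?_⟩
      intro hap
      apply hne
      rw [hap] at habs
      simp only [norm_zero] at habs
      have : am = 0 := by
        have := habs.symm
        exact norm_eq_zero.mp this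
      simp [hap, this]
    · rintro ⟨habs, hap⟩
      have hcc : (starRingEnd ℂ) ap * ap = (starRingEnd ℂ) am * am := by
        rw [Complex.conj_mul', Complex.conj_mul']
        norm_cast
        rw [habs]
      constructor
      · rintro u ⟨c, wu, hu⟩ v ⟨c', wv, hv⟩
        have hu' : (u : H) = (c * ap) • (sp : H) + (c * am) • (sm : H) + (wu : H) := by
          rw [hu]; rw [smul_add, smul_smul, smul_smul]
        have hv' : (v : H) = (c' * ap) • (sp : H) + (c' * am) • (sm : H) + (wv : H) := by
          rw [hv]; rw [smul_add, smul_smul, smul_smul]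
        rw [key u v _ _ _ _ wu wv hu' hv']
        have : (starRingEnd ℂ) (c * ap) * (c' * ap) -
            (starRingEnd ℂ) (c * am) * (c' * am) = 0 := by
          simp only [map_mul]
          linear_combination (starRingEnd ℂ) c * c' * hcc
        rw [this, zero_mul]
      · intro u hu
        obtain ⟨p, m, w, hw⟩ := hdecomp u
        set v0 : Dstar := ap • sp + am • sm with hv0
        have hmem : v0 ∈ saDom D sp sm ap am := ⟨1, 0, by simp [hv0]⟩
        have h1 := hu v0 hmem
        have h2 : qform Astar u v0 =
            ((starRingEnd ℂ) p * ap - (starRingEnd ℂ) m * am) * Q := by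
          apply key u v0 p m ap am w 0 hw
          simp [hv0]
        rw [h1] at h2
        have h3 : (starRingEnd ℂ) p * ap = (starRingEnd ℂ) m * am := by
          rcases mul_eq_zero.1 h2.symm with h | h
          · linear_combination h
          · exact absurd h hpp0
        -- conjugate: p * conj ap = m * conj am
        have h4 : p * (starRingEnd ℂ) ap = m * (starRingEnd ℂ) am := by
          have := congrArg (starRingEnd ℂ) h3
          simpa [map_mul, mul_comm] using this
        -- deduce p * am = m * ap
        have h5 : p * am = m * ap := by
          have hcap : (starRingEnd ℂ) ap ≠ 0 := by
            simpa using hap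
          have : p * (starRingEnd ℂ) ap * am = m * (starRingEnd ℂ) ap * ap := by
            calc p * (starRingEnd ℂ) ap * am = m * (starRingEnd ℂ) am * am := by
                  rw [h4]
              _ = m * ((starRingEnd ℂ) am * am) := by ring
              _ = m * ((starRingEnd ℂ) ap * ap) := by rw [hcc]
              _ = m * (starRingEnd ℂ) ap * ap := by ring
          have := mul_left_cancel₀ hcap (by linear_combination this : (starRingEnd ℂ) ap * (p * am) = (starRingEnd ℂ) ap * (m * ap))
          exact this
        refine ⟨p / ap, w, ?_⟩
        rw [hw, smul_add, smul_smul, smul_smul]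
        congr 2
        · congr 1
          field_simp
        · congr 1
          field_simp
          linear_combination -h5
  refine ⟨main, ?_, ?_⟩
  · intro τ
    refine (main 1 (Complex.exp (τ * Complex.I)) (by simp)).mpr ⟨?_, one_ne_zero⟩
    rw [Complex.norm_exp_ofReal_mul_I]
    simp
  · intro ap am habs hap
    refine ⟨(am / ap).arg, ?_⟩
    have habs1 : ‖am / ap‖ = 1 := by
      rw [norm_div, ← habs, div_self]
      simpa using hap
    have hexp : Complex.exp ((am / ap).arg * Complex.I) = am / ap := by
      have := Complex.norm_mul_exp_arg_mul_I (am / ap)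
      rwa [habs1, Complex.ofReal_one, one_mul] at this
    rw [hexp]
    ext u
    constructor
    · rintro ⟨c, w, hu⟩
      refine ⟨c * ap, w, ?_⟩
      rw [hu, smul_add, smul_add, smul_smul, smul_smul, smul_smul, smul_smul]
      congr 2
      · congr 1; ring
      · congr 1; field_simp; try ring
    · rintro ⟨c, w, hu⟩
      refine ⟨c / ap, w, ?_⟩
      rw [hu, smul_add, smul_add, smul_smul, smul_smul, smul_smul, smul_smul]
      congr 2
      · congr 1; field_simp
      · congr 1; field_simp; try ring
end
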